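/- Let T* ∈ (0,∞], let μ : [0,T*) → [0,∞) be locally Lebesgue integrable, let H₀ > 0, and let H : [0,T*) → [0,∞) be continuous and satisfy H(t) ≤ H₀ + ∫₀ᵗ μ(r)·H(r)³ dr for all t ∈ [0,T*). If sup_{t ∈ [0,T*)} H(t) = ∞, then ∫₀^{T*} μ(r) dr ≥ 1 / (2·H₀²). -/

import Mathlib

open MeasureTheory Set
open scoped ENNReal


/-- Slice bound: if `m t = ∫_(0,t] μ` and `E ⊆ (0,τ]` is a set on which `a ≤ m r ≤ b`,
then `∫_E μ ≤ b - a`. -/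
lemma slice_bound (μ : ℝ → ℝ) (τ a b : ℝ)
    (hint : IntegrableOn μ (Set.Icc 0 τ))
    (hpos : ∀ r ∈ Set.Ioc (0:ℝ) τ, 0 ≤ μ r)
    (hm : ContinuousOn (fun t => ∫ r in Set.Ioc 0 t, μ r) (Set.Icc 0 τ))
    (E : Set ℝ) (hE : E ⊆ Set.Ioc 0 τ)
    (hab : a ≤ b)
    (hEa : ∀ r ∈ E, a ≤ ∫ x in Set.Ioc 0 r, μ x)
    (hEb : ∀ r ∈ E, (∫ x in Set.Ioc 0 r, μ x) ≤ b) :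
    ∫ r in E, μ r ≤ b - a := by
  rcases E.eq_empty_or_nonempty with hEe | hEne
  · simp [hEe]; linarith
  set m : ℝ → ℝ := fun t => ∫ x in Set.Ioc 0 t, μ x with hmdef
  have hτ0 : 0 ≤ τ := by
    obtain ⟨r, hr⟩ := hEne
    exact le_trans (hE hr).1.le (hE hr).2
  have hbdd_below : BddBelow E := ⟨0, fun r hr => (hE hr).1.le⟩
  have hbdd_above : BddAbove E := ⟨τ, fun r hr => (hE hr).2⟩
  set s := sInf E with hs
  set u := sSup E with hu
  have hsIcc : s ∈ Set.Icc 0 τ := by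
    constructor
    · exact le_csInf hEne fun r hr => (hE hr).1.le
    · obtain ⟨r, hr⟩ := hEne
      exact le_trans (csInf_le hbdd_below hr) (hE hr).2
  have huIcc : u ∈ Set.Icc 0 τ := by
    constructor
    · obtain ⟨r, hr⟩ := hEne
      exact le_trans (hE hr).1.le (le_csSup hbdd_above hr)
    · exact csSup_le hEne fun r hr => (hE hr).2
  have hsu : s ≤ u := csInf_le_csSup hEne hbdd_below hbdd_above
  -- m s ≥ a
  have hclosA : IsClosed (Set.Icc 0 τ ∩ m ⁻¹' Set.Ici a) :=
    hm.preimage_isClosed_of_isClosed isClosed_Icc isClosed_Ici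
  have hclosB : IsClosed (Set.Icc 0 τ ∩ m ⁻¹' Set.Iic b) :=
    hm.preimage_isClosed_of_isClosed isClosed_Icc isClosed_Iic
  have hsub_A : E ⊆ Set.Icc 0 τ ∩ m ⁻¹' Set.Ici a := fun r hr =>
    ⟨⟨(hE hr).1.le, (hE hr).2⟩, hEa r hr⟩
  have hsub_B : E ⊆ Set.Icc 0 τ ∩ m ⁻¹' Set.Iic b := fun r hr =>
    ⟨⟨(hE hr).1.le, (hE hr).2⟩, hEb r hr⟩
  have hma : a ≤ m s := by
    have := csInf_mem_closure hEne hbdd_below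
    have h2 : s ∈ Set.Icc 0 τ ∩ m ⁻¹' Set.Ici a :=
      hclosA.closure_subset ((closure_mono hsub_A) this)
    exact h2.2
  have hmb : m u ≤ b := by
    have := csSup_mem_closure hEne hbdd_above
    have h2 : u ∈ Set.Icc 0 τ ∩ m ⁻¹' Set.Iic b :=
      hclosB.closure_subset ((closure_mono hsub_B) this)
    exact h2.2
  -- ∫_E μ ≤ ∫_{Ioc s u} μ
  have hIocsub : Set.Ioc s u ⊆ Set.Ioc 0 τ :=
    Set.Ioc_subset_Ioc hsIcc.1 huIcc.2
  have hint_su : IntegrableOn μ (Set.Ioc s u) :=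
    hint.mono_set (hIocsub.trans Set.Ioc_subset_Icc_self)
  have hpos_su : 0 ≤ᵐ[volume.restrict (Set.Ioc s u)] μ := by
    rw [Filter.EventuallyLE, ae_restrict_iff' measurableSet_Ioc]
    exact ae_of_all _ fun r hr => hpos r (hIocsub hr)
  have hEle : E ≤ᵐ[volume] Set.Ioc s u := by
    rw [ae_le_set]
    refine measure_mono_null (fun r hr => ?_) (measure_singleton s)
    rcases hr with ⟨hrE, hrn⟩
    have h1 : s ≤ r := csInf_le hbdd_below hrE
    have h2 : r ≤ u := le_csSup hbdd_above hrE
    simp only [Set.mem_Ioc, not_and_or, not_lt, not_le] at hrn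
    rcases hrn with h | h
    · exact Set.mem_singleton_iff.2 (le_antisymm h h1)
    · exact absurd h2 (not_le.2 h)
  have h1 : ∫ r in E, μ r ≤ ∫ r in Set.Ioc s u, μ r :=
    setIntegral_mono_set hint_su hpos_su hEle
  have h2 : (∫ r in Set.Ioc s u, μ r) = m u - m s := by
    have hun : Set.Ioc (0:ℝ) s ∪ Set.Ioc s u = Set.Ioc 0 u :=
      Set.Ioc_union_Ioc_eq_Ioc hsIcc.1 hsu
    have hdisj : Disjoint (Set.Ioc (0:ℝ) s) (Set.Ioc s u) := by
      rw [Set.disjoint_left]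
      intro r h1 h2
      exact absurd h1.2 (not_le.2 h2.1)
    have hadd := setIntegral_union (f := μ) (μ := volume) hdisj measurableSet_Ioc
      (hint.mono_set (Set.Ioc_subset_Icc_self.trans (Set.Icc_subset_Icc_right hsIcc.2)))
      hint_su
    rw [hun] at hadd
    simp only [hmdef]
    rw [hadd]
    ring
  linarith [hma, hmb, h1, h2]

set_option maxHeartbeats 3200000 in
theorem stmt_13 (T : ℝ≥0∞) (hT : 0 < T)
    (μ : ℝ → ℝ)
    (hμ_nonneg : ∀ t, 0 ≤ t → ENNReal.ofReal t < T → 0 ≤ μ t)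
    (hμ_loc : ∀ t, 0 ≤ t → ENNReal.ofReal t < T → IntegrableOn μ (Set.Icc 0 t))
    (H₀ : ℝ) (hH₀ : 0 < H₀)
    (H : ℝ → ℝ)
    (hH_cont : ContinuousOn H {t : ℝ | 0 ≤ t ∧ ENNReal.ofReal t < T})
    (hH_nonneg : ∀ t, 0 ≤ t → ENNReal.ofReal t < T → 0 ≤ H t)
    (hH : ∀ t, 0 ≤ t → ENNReal.ofReal t < T →
      H t ≤ H₀ + ∫ r in Set.Ioc 0 t, μ r * H r ^ 3)
    (hblow : ∀ M : ℝ, ∃ t, 0 ≤ t ∧ ENNReal.ofReal t < T ∧ M < H t) :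
    ENNReal.ofReal (1 / (2 * H₀ ^ 2)) ≤
      ∫⁻ r in {t : ℝ | 0 ≤ t ∧ ENNReal.ofReal t < T}, ENNReal.ofReal (μ r) := by
  by_contra hcon
  push_neg at hcon
  obtain ⟨S, hSdef⟩ : ∃ S : Set ℝ, S = {t : ℝ | 0 ≤ t ∧ ENNReal.ofReal t < T} := ⟨_, rfl⟩
  rw [← hSdef] at hcon hH_cont
  have hLne : (∫⁻ r in S, ENNReal.ofReal (μ r)) ≠ ⊤ :=
    (hcon.trans_le le_top).ne
  obtain ⟨I, hIdef⟩ : ∃ I : ℝ, I = (∫⁻ r in S, ENNReal.ofReal (μ r)).toReal :=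
    ⟨_, rfl⟩
  have hI0 : 0 ≤ I := hIdef ▸ ENNReal.toReal_nonneg
  have hIlt : I < 1 / (2 * H₀ ^ 2) := hIdef ▸ ENNReal.toReal_lt_of_lt_ofReal hcon
  have h2H : (0:ℝ) < 2 * H₀ ^ 2 := by positivity
  have hc1 : 2 * (H₀ ^ 2 * I) < 1 := by
    have := (lt_div_iff₀ h2H).1 hIlt
    nlinarith
  -- membership helper
  have hsubS : ∀ t : ℝ, 0 ≤ t → ENNReal.ofReal t < T →
      ∀ r ∈ Set.Ioc (0:ℝ) t, 0 ≤ r ∧ ENNReal.ofReal r < T := by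
    intro t ht0 htT r hr
    exact ⟨hr.1.le, lt_of_le_of_lt (ENNReal.ofReal_le_ofReal hr.2) htT⟩
  -- the cumulative integral is bounded by I
  have hm_le_I : ∀ t : ℝ, 0 ≤ t → ENNReal.ofReal t < T →
      (∫ r in Set.Ioc 0 t, μ r) ≤ I := by
    intro t ht0 htT
    have hint : IntegrableOn μ (Set.Ioc 0 t) :=
      (hμ_loc t ht0 htT).mono_set Set.Ioc_subset_Icc_self
    have hnn : 0 ≤ᵐ[volume.restrict (Set.Ioc 0 t)] μ := by
      rw [Filter.EventuallyLE, ae_restrict_iff' measurableSet_Ioc]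
      exact ae_of_all _ fun r hr => hμ_nonneg r (hsubS t ht0 htT r hr).1
        (hsubS t ht0 htT r hr).2
    have heq := ofReal_integral_eq_lintegral_ofReal hint hnn
    have hle : (∫⁻ r in Set.Ioc 0 t, ENNReal.ofReal (μ r)) ≤
        ∫⁻ r in S, ENNReal.ofReal (μ r) :=
      lintegral_mono_set fun r hr => by
        rw [hSdef]
        exact ⟨(hsubS t ht0 htT r hr).1, (hsubS t ht0 htT r hr).2⟩
    rw [← heq] at hle
    rw [hIdef]
    exact (ENNReal.ofReal_le_iff_le_toReal hLne).1 hle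
  -- choose the ratio l = 1 + ε
  obtain ⟨c, hcdef⟩ : ∃ c : ℝ, c = H₀ ^ 2 * I := ⟨_, rfl⟩
  have hc0 : 0 ≤ c := by rw [hcdef]; positivity
  obtain ⟨ε, hεdef⟩ : ∃ ε : ℝ, ε = min (1/2 : ℝ) ((1 - 2*c) / (200 * (c + 1))) := ⟨_, rfl⟩
  have hε0 : 0 < ε := by
    rw [hεdef]
    apply lt_min (by norm_num)
    apply div_pos (by linarith) (by linarith)
  have hεhalf : ε ≤ 1/2 := hεdef ▸ min_le_left _ _
  have hεc : ε * (200 * (c + 1)) ≤ 1 - 2*c := by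
    have h : ε ≤ (1 - 2*c) / (200 * (c + 1)) := hεdef ▸ min_le_right _ _
    have h200 : (0:ℝ) < 200 * (c + 1) := by linarith
    calc ε * (200 * (c + 1)) ≤ ((1 - 2*c) / (200 * (c + 1))) * (200 * (c + 1)) := by
          exact mul_le_mul_of_nonneg_right h h200.le
      _ = 1 - 2*c := by field_simp
  obtain ⟨l, hldef⟩ : ∃ l : ℝ, l = 1 + ε := ⟨_, rfl⟩
  have hl1 : 1 < l := by rw [hldef]; linarith
  have hl0 : 0 < l := by linarith
  have q2 : ε^2 ≤ ε/2 := by nlinarith [hε0.le, hεhalf]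
  have q3 : ε^3 ≤ ε/4 := by nlinarith [q2, hεhalf, sq_nonneg ε]
  have q4 : ε^4 ≤ ε/8 := by
    nlinarith [q3, hεhalf, mul_nonneg (mul_nonneg hε0.le hε0.le) hε0.le]
  have q5 : ε^5 ≤ ε/16 := by
    nlinarith [q4, hεhalf, mul_nonneg (mul_nonneg (mul_nonneg hε0.le hε0.le) hε0.le) hε0.le]
  have hexp : l^4 * (l+1) ≤ 2 + 100 * ε := by
    rw [hldef]
    nlinarith [q2, q3, q4, q5, hε0.le]
  have hkey : l^4 * (l+1) * c < 1 := by
    have h1 : l^4 * (l+1) * c ≤ (2 + 100*ε) * c :=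
      mul_le_mul_of_nonneg_right hexp hc0
    have h2 : 100 * ε * c ≤ (1 - 2*c)/2 := by nlinarith [hεc, hc0, hε0.le]
    nlinarith
  -- the step sizes
  obtain ⟨δ, hδdef⟩ : ∃ δ : ℕ → ℝ, δ = fun j => (l-1) / (H₀^2 * l^(2*j+6)) := ⟨_, rfl⟩
  obtain ⟨σ, hσdef⟩ : ∃ σ : ℕ → ℝ, σ = fun k => ∑ j ∈ Finset.range k, δ j := ⟨_, rfl⟩
  have hδ0 : ∀ j, 0 ≤ δ j := by
    intro j
    rw [hδdef]
    apply div_nonneg (by linarith)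
    positivity
  have hσ_succ : ∀ k, σ (k+1) = σ k + δ k := by
    intro k; simp [hσdef, Finset.sum_range_succ]
  -- MAIN INDUCTION
  have key : ∀ k : ℕ, ∀ t : ℝ, 0 ≤ t → ENNReal.ofReal t < T →
      (∫ r in Set.Ioc 0 t, μ r) ≤ σ k → H t ≤ H₀ * l^(k+1) := by
    intro k
    induction k using Nat.strong_induction_on with
    | _ k ih =>
    intro T₁ hT₁0 hT₁T hmT₁
    by_contra hcontra
    push_neg at hcontra
    have hlne : l ≠ 0 := ne_of_gt hl0
    have hHne : H₀ ≠ 0 := ne_of_gt hH₀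
    -- basic facts on [0,T₁]
    have hsub1 : Set.Icc (0:ℝ) T₁ ⊆ S := by
      rw [hSdef]
      intro r hr
      exact ⟨hr.1, lt_of_le_of_lt (ENNReal.ofReal_le_ofReal hr.2) hT₁T⟩
    have hHc : ContinuousOn H (Set.Icc 0 T₁) := hH_cont.mono hsub1
    have hμint : IntegrableOn μ (Set.Icc 0 T₁) := hμ_loc T₁ hT₁0 hT₁T
    obtain ⟨m, hmdef⟩ : ∃ m : ℝ → ℝ, m = fun t => ∫ r in Set.Ioc 0 t, μ r := ⟨_, rfl⟩
    have hmcont : ContinuousOn m (Set.Icc 0 T₁) := by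
      rw [hmdef]
      exact intervalIntegral.continuousOn_primitive hμint
    have hμnn : ∀ r ∈ Set.Ioc (0:ℝ) T₁, 0 ≤ μ r := fun r hr =>
      hμ_nonneg r (hsubS T₁ hT₁0 hT₁T r hr).1 (hsubS T₁ hT₁0 hT₁T r hr).2
    have hmmono : ∀ s t : ℝ, 0 ≤ s → s ≤ t → t ≤ T₁ → m s ≤ m t := by
      intro s t hs hst htT
      rw [hmdef]
      refine setIntegral_mono_set
        (hμint.mono_set ((Set.Ioc_subset_Icc_self).trans (Set.Icc_subset_Icc_right htT)))
        ?_ (HasSubset.Subset.eventuallyLE (Set.Ioc_subset_Ioc_right hst))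
      rw [Filter.EventuallyLE, ae_restrict_iff' measurableSet_Ioc]
      exact ae_of_all _ fun r hr => hμnn r ⟨hr.1, hr.2.trans htT⟩
    -- the first time H reaches the bound B
    obtain ⟨B, hBdef⟩ : ∃ B : ℝ, B = H₀ * l^(k+1) := ⟨_, rfl⟩
    rw [← hBdef] at hcontra
    have hBpos : 0 < B := by rw [hBdef]; positivity
    obtain ⟨V, hVdef⟩ : ∃ V : Set ℝ, V = {s : ℝ | s ∈ Set.Icc 0 T₁ ∧ B < H s} := ⟨_, rfl⟩
    have hVne : V.Nonempty := ⟨T₁, by rw [hVdef]; exact ⟨⟨hT₁0, le_rfl⟩, hcontra⟩⟩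
    have hVbdd : BddBelow V := ⟨0, fun r hr => by rw [hVdef] at hr; exact hr.1.1⟩
    obtain ⟨τ, hτdef⟩ : ∃ τ : ℝ, τ = sInf V := ⟨_, rfl⟩
    have hτIcc : τ ∈ Set.Icc 0 T₁ ∧ B ≤ H τ := by
      have hclos : IsClosed (Set.Icc 0 T₁ ∩ H ⁻¹' Set.Ici B) :=
        hHc.preimage_isClosed_of_isClosed isClosed_Icc isClosed_Ici
      have hsubV : V ⊆ Set.Icc 0 T₁ ∩ H ⁻¹' Set.Ici B := by
        rw [hVdef]; exact fun r hr => ⟨hr.1, hr.2.le⟩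
      have := hclos.closure_subset ((closure_mono hsubV) (hτdef ▸ csInf_mem_closure hVne hVbdd))
      exact ⟨this.1, this.2⟩
    obtain ⟨⟨hτ0, hτT₁⟩, hτH⟩ := hτIcc
    have hτdom : ENNReal.ofReal τ < T :=
      lt_of_le_of_lt (ENNReal.ofReal_le_ofReal hτT₁) hT₁T
    have hlt : ∀ s, 0 ≤ s → s ≤ T₁ → s < τ → H s ≤ B := by
      intro s hs hsT hsτ
      by_contra hc
      push_neg at hc
      have hmem : s ∈ V := by rw [hVdef]; exact ⟨⟨hs, hsT⟩, hc⟩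
      have := csInf_le hVbdd hmem
      rw [← hτdef] at this
      linarith
    -- clamped cumulative function
    obtain ⟨g, hgdef⟩ : ∃ g : ℝ → ℝ, g = fun t => m (max 0 (min t τ)) := ⟨_, rfl⟩
    have hgcont : Continuous g := by
      rw [hgdef]
      apply ContinuousOn.comp_continuous (hmcont.mono (Set.Icc_subset_Icc_right hτT₁))
        (continuous_const.max (continuous_id.min continuous_const))
      intro y
      exact ⟨le_max_left _ _, max_le hτ0 (min_le_right _ _)⟩
    have hgm : ∀ r ∈ Set.Icc 0 τ, g r = m r := by
      intro r hr
      rw [hgdef]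
      simp only
      rw [min_eq_left hr.2, max_eq_right hr.1]
    obtain ⟨F, hFdef⟩ : ∃ F : ℕ → Set ℝ,
        F = fun j => Set.Ioc 0 τ ∩ g ⁻¹' (Set.Ioc (σ j) (σ (j+1))) := ⟨_, rfl⟩
    obtain ⟨G, hGdef⟩ : ∃ G : ℕ → Set ℝ,
        G = fun j => Set.Ioc 0 τ ∩ g ⁻¹' (Set.Iic (σ j)) := ⟨_, rfl⟩
    have hFmeas : ∀ j, MeasurableSet (F j) := by
      intro j
      rw [hFdef]
      exact measurableSet_Ioc.inter (hgcont.measurable measurableSet_Ioc)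
    have hGmeas : ∀ j, MeasurableSet (G j) := by
      intro j
      rw [hGdef]
      exact measurableSet_Ioc.inter (hgcont.measurable measurableSet_Iic)
    have hFsub : ∀ j, F j ⊆ Set.Ioc 0 τ := by
      intro j; rw [hFdef]; exact Set.inter_subset_left
    have hGsub : ∀ j, G j ⊆ Set.Ioc 0 τ := by
      intro j; rw [hGdef]; exact Set.inter_subset_left
    have hIocT₁ : Set.Ioc (0:ℝ) τ ⊆ Set.Icc 0 T₁ :=
      Set.Ioc_subset_Icc_self.trans (Set.Icc_subset_Icc_right hτT₁)
    have hHint : IntegrableOn (fun r => μ r * H r ^ 3) (Set.Icc 0 T₁) :=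
      hμint.mul_continuousOn (hHc.pow 3) isCompact_Icc
    have hne_τ : ∀ᵐ r : ℝ, r ≠ τ := by
      have hset : {a : ℝ | ¬ a ≠ τ} = {τ} := by ext a; simp
      rw [ae_iff, hset]
      exact measure_singleton τ
    -- pointwise bound on a piece
    have hbound_on : ∀ (E : Set ℝ), MeasurableSet E → E ⊆ Set.Ioc 0 τ → ∀ Bd : ℝ, 0 ≤ Bd →
        (∀ r ∈ E, r ≠ τ → H r ≤ Bd) →
        (∫ r in E, μ r * H r ^ 3) ≤ Bd^3 * ∫ r in E, μ r := by
      intro E hEm hEsub Bd hBd0 hBH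
      have hi1 : IntegrableOn (fun r => μ r * H r ^ 3) E := hHint.mono_set (hEsub.trans hIocT₁)
      have hi2 : IntegrableOn (fun r => Bd^3 * μ r) E :=
        (hμint.mono_set (hEsub.trans hIocT₁)).const_mul _
      have hae : ∀ᵐ r ∂(volume.restrict E), μ r * H r ^ 3 ≤ Bd^3 * μ r := by
        rw [ae_restrict_iff' hEm]
        filter_upwards [hne_τ] with r hrne hrE
        have hrIoc : r ∈ Set.Ioc (0:ℝ) T₁ := ⟨(hEsub hrE).1, (hEsub hrE).2.trans hτT₁⟩
        have hμr : 0 ≤ μ r := hμnn r hrIoc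
        have hHr0 : 0 ≤ H r := hH_nonneg r (hsubS T₁ hT₁0 hT₁T r hrIoc).1
          (hsubS T₁ hT₁0 hT₁T r hrIoc).2
        have hHrB : H r ≤ Bd := hBH r hrE hrne
        calc μ r * H r ^ 3 ≤ μ r * Bd ^ 3 :=
              mul_le_mul_of_nonneg_left (pow_le_pow_left₀ hHr0 hHrB 3) hμr
          _ = Bd ^ 3 * μ r := mul_comm _ _
      calc (∫ r in E, μ r * H r ^ 3) ≤ ∫ r in E, Bd^3 * μ r := integral_mono_ae hi1 hi2 hae
        _ = Bd^3 * ∫ r in E, μ r := integral_const_mul _ _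
    -- slice estimate
    have hslice : ∀ (E : Set ℝ) (a b : ℝ), E ⊆ Set.Ioc 0 τ → a ≤ b →
        (∀ r ∈ E, a ≤ m r) → (∀ r ∈ E, m r ≤ b) → (∫ r in E, μ r) ≤ b - a := by
      intro E a b hEsub hab ha hb
      have hmc' : ContinuousOn (fun t => ∫ r in Set.Ioc 0 t, μ r) (Set.Icc 0 τ) := by
        rw [← hmdef]
        exact hmcont.mono (Set.Icc_subset_Icc_right hτT₁)
      refine slice_bound μ τ a b (hμint.mono_set (Set.Icc_subset_Icc_right hτT₁))
        (fun r hr => hμnn r ⟨hr.1, hr.2.trans hτT₁⟩) hmc' E hEsub hab ?_ ?_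
      · intro r hr
        have := ha r hr
        rwa [hmdef] at this
      · intro r hr
        have := hb r hr
        rwa [hmdef] at this
    have hστ : m τ ≤ σ k := by
      have h1 : m τ ≤ m T₁ := hmmono τ T₁ hτ0 hτT₁ le_rfl
      have h2 : m T₁ ≤ σ k := by rw [hmdef]; exact hmT₁
      linarith
    have hGk : G k = Set.Ioc 0 τ := by
      rw [hGdef]
      refine Set.inter_eq_left.2 fun r hr => ?_
      simp only [Set.mem_preimage, Set.mem_Iic]
      rw [hgm r ⟨hr.1.le, hr.2⟩]
      exact le_trans (hmmono r τ hr.1.le hr.2 hτT₁) hστ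
    have hm_nonneg : ∀ r ∈ Set.Ioc (0:ℝ) τ, 0 ≤ m r := by
      intro r hr
      rw [hmdef]
      apply setIntegral_nonneg measurableSet_Ioc
      intro y hy
      exact hμnn y ⟨hy.1, hy.2.trans (hr.2.trans hτT₁)⟩
    -- the inner induction
    have inner : ∀ j, j ≤ k → (∫ r in G j, μ r * H r ^ 3) ≤ H₀ * (l^j - 1) := by
      intro j
      induction j with
      | zero =>
        intro _
        have h1 : (∫ r in G 0, μ r * H r ^ 3) ≤ B^3 * ∫ r in G 0, μ r := by
          refine hbound_on (G 0) (hGmeas 0) (hGsub 0) B hBpos.le fun r hr hrne => ?_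
          exact hlt r (hGsub 0 hr).1.le ((hGsub 0 hr).2.trans hτT₁)
            (lt_of_le_of_ne (hGsub 0 hr).2 hrne)
        have h2 : (∫ r in G 0, μ r) ≤ 0 - 0 := by
          refine hslice (G 0) 0 0 (hGsub 0) le_rfl
            (fun r hr => hm_nonneg r (hGsub 0 hr)) fun r hr => ?_
          rw [← hgm r ⟨(hGsub 0 hr).1.le, (hGsub 0 hr).2⟩]
          have hgr : g r ≤ σ 0 := by
            rw [hGdef] at hr
            exact hr.2
          calc g r ≤ σ 0 := hgr
            _ = 0 := by rw [hσdef]; simp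
        have h3 : B^3 * (∫ r in G 0, μ r) ≤ 0 :=
          mul_nonpos_of_nonneg_of_nonpos (by positivity) (by linarith)
        have h4 : H₀ * (l^0 - 1) = 0 := by simp
        linarith
      | succ j ihj =>
        intro hjk
        have hjk' : j ≤ k := Nat.le_of_succ_le hjk
        have hGsplit : G (j+1) = G j ∪ F j := by
          rw [hGdef, hFdef]
          ext r
          simp only [Set.mem_inter_iff, Set.mem_union, Set.mem_preimage, Set.mem_Iic,
            Set.mem_Ioc]
          constructor
          · rintro ⟨h1, h2⟩
            rcases le_or_gt (g r) (σ j) with h | h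
            · exact Or.inl ⟨h1, h⟩
            · exact Or.inr ⟨h1, h, h2⟩
          · rintro (⟨h1, h2⟩ | ⟨h1, h2, h3⟩)
            · exact ⟨h1, h2.trans (by linarith [hδ0 j, hσ_succ j])⟩
            · exact ⟨h1, h3⟩
        have hdisj : Disjoint (G j) (F j) := by
          rw [Set.disjoint_left]
          intro r hG hF
          rw [hGdef] at hG
          rw [hFdef] at hF
          simp only [Set.mem_inter_iff, Set.mem_preimage, Set.mem_Iic, Set.mem_Ioc] at hG hF
          exact absurd hF.2.1 (not_lt.2 hG.2)
        have hadd : (∫ r in G (j+1), μ r * H r ^ 3)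
            = (∫ r in G j, μ r * H r ^ 3) + ∫ r in F j, μ r * H r ^ 3 := by
          rw [hGsplit]
          exact setIntegral_union hdisj (hFmeas j)
            (hHint.mono_set ((hGsub j).trans hIocT₁))
            (hHint.mono_set ((hFsub j).trans hIocT₁))
        have hBj : ∀ r ∈ F j, r ≠ τ → H r ≤ H₀ * l^(j+2) := by
          intro r hr hrne
          have hrIoc := hFsub j hr
          have hrF := hr
          rw [hFdef] at hrF
          have hgr : σ j < g r ∧ g r ≤ σ (j+1) := hrF.2
          rcases lt_or_eq_of_le hjk with hlt' | heq'
          · have hdom : ENNReal.ofReal r < T :=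
              lt_of_le_of_lt (ENNReal.ofReal_le_ofReal (hrIoc.2.trans hτT₁)) hT₁T
            have hmr : (∫ x in Set.Ioc 0 r, μ x) ≤ σ (j+1) := by
              have h5 : m r = g r := (hgm r ⟨hrIoc.1.le, hrIoc.2⟩).symm
              simp only [hmdef] at h5
              rw [h5]
              exact hgr.2
            have := ih (j+1) hlt' r hrIoc.1.le hdom hmr
            have hee : j + 1 + 1 = j + 2 := by omega
            rwa [hee] at this
          · have hb := hlt r hrIoc.1.le (hrIoc.2.trans hτT₁) (lt_of_le_of_ne hrIoc.2 hrne)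
            have hee : k + 1 = j + 2 := by omega
            rw [hBdef, hee] at hb
            exact hb
        have hFineq : (∫ r in F j, μ r * H r ^ 3) ≤ (H₀ * l^(j+2))^3 * δ j := by
          have h1 := hbound_on (F j) (hFmeas j) (hFsub j) (H₀*l^(j+2)) (by positivity) hBj
          have h2 : (∫ r in F j, μ r) ≤ σ (j+1) - σ j := by
            refine hslice (F j) (σ j) (σ (j+1)) (hFsub j)
              (by linarith [hδ0 j, hσ_succ j]) (fun r hr => ?_) (fun r hr => ?_)
            · rw [← hgm r ⟨(hFsub j hr).1.le, (hFsub j hr).2⟩]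
              have hrF := hr
              rw [hFdef] at hrF
              exact hrF.2.1.le
            · rw [← hgm r ⟨(hFsub j hr).1.le, (hFsub j hr).2⟩]
              have hrF := hr
              rw [hFdef] at hrF
              exact hrF.2.2
          have h3 : σ (j+1) - σ j = δ j := by rw [hσ_succ j]; ring
          calc (∫ r in F j, μ r * H r ^ 3) ≤ (H₀*l^(j+2))^3 * ∫ r in F j, μ r := h1
            _ ≤ (H₀*l^(j+2))^3 * δ j := by
                refine mul_le_mul_of_nonneg_left ?_ (by positivity)
                rw [← h3]
                exact h2
        have halg : (H₀ * l^(j+2))^3 * δ j = H₀ * (l-1) * l^j := by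
          rw [hδdef]
          simp only
          field_simp
          ring
        calc (∫ r in G (j+1), μ r * H r ^ 3)
            = (∫ r in G j, μ r * H r ^ 3) + ∫ r in F j, μ r * H r ^ 3 := hadd
          _ ≤ H₀*(l^j - 1) + (H₀ * l^(j+2))^3 * δ j := add_le_add (ihj hjk') hFineq
          _ = H₀*(l^(j+1) - 1) := by rw [halg]; ring
    -- conclude: contradiction at τ
    have hHτ : H τ ≤ H₀ + ∫ r in Set.Ioc 0 τ, μ r * H r ^ 3 := hH τ hτ0 hτdom
    have hint_τ : (∫ r in Set.Ioc 0 τ, μ r * H r ^ 3) ≤ H₀ * (l^k - 1) := by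
      rw [← hGk]
      exact inner k le_rfl
    have hring : H₀ + H₀ * (l^k - 1) = H₀ * l^k := by ring
    have hfin : H τ ≤ H₀ * l^k := by linarith
    have hpow : l^k < l^(k+1) := pow_lt_pow_right₀ hl1 (Nat.lt_succ_self k)
    have hBk : H₀ * l^k < B := by
      rw [hBdef]
      nlinarith [hpow, hH₀]
    linarith
  -- choose N with σ N ≥ I
  have hl0' : (0:ℝ) < H₀^2 * l^4 * (l+1) := by positivity
  obtain ⟨Sg, hSgdef⟩ : ∃ Sg : ℝ, Sg = 1 / (H₀^2 * l^4 * (l+1)) := ⟨_, rfl⟩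
  have hSgpos : 0 < Sg := by rw [hSgdef]; positivity
  have hIltSg : I < Sg := by
    rw [hSgdef, lt_div_iff₀ (by positivity)]
    calc I * (H₀^2 * l^4 * (l+1)) = l^4 * (l+1) * c := by rw [hcdef]; ring
      _ < 1 := hkey
  obtain ⟨x, hxdef⟩ : ∃ x : ℝ, x = 1 / l^2 := ⟨_, rfl⟩
  have hx0 : 0 < x := by rw [hxdef]; positivity
  have hx1 : x < 1 := by
    rw [hxdef, div_lt_one (by positivity)]
    exact one_lt_pow₀ hl1 two_ne_zero
  obtain ⟨N, hN⟩ := exists_pow_lt_of_lt_one (show (0:ℝ) < 1 - I/Sg by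
    rw [sub_pos, div_lt_one hSgpos]; exact hIltSg) hx1
  have hIσN : I ≤ σ N := by
    have hδx : ∀ j, δ j = ((l-1)/(H₀^2 * l^6)) * x^j := by
      intro j
      have hlne : l ≠ 0 := ne_of_gt hl0
      have hHne : H₀ ≠ 0 := ne_of_gt hH₀
      simp only [hδdef, hxdef]
      rw [pow_add, pow_mul, div_pow, one_pow]
      field_simp
    have hgeo : σ N = ((l-1)/(H₀^2 * l^6)) * ((x^N - 1)/(x - 1)) := by
      simp only [hσdef]
      rw [Finset.sum_congr rfl fun j _ => hδx j, ← Finset.mul_sum, geom_sum_eq hx1.ne]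
    have hSgid : Sg * (1 - x) = (l-1)/(H₀^2 * l^6) := by
      simp only [hSgdef, hxdef]
      field_simp
      ring
    have hineq : I < Sg * (1 - x^N) := by
      have := (div_lt_iff₀ hSgpos).1 (by linarith [hN] : I/Sg < 1 - x^N)
      linarith
    have hx1' : x - 1 ≠ 0 := by intro h; rw [sub_eq_zero] at h; exact hx1.ne h
    have hfrac : (1-x) * ((x^N - 1)/(x-1)) = 1 - x^N := by
      field_simp
      ring
    have hfin : σ N = Sg * (1 - x^N) := by
      calc σ N = Sg * (1-x) * ((x^N - 1)/(x-1)) := by rw [hgeo, hSgid]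
        _ = Sg * ((1-x) * ((x^N - 1)/(x-1))) := by ring
        _ = Sg * (1 - x^N) := by rw [hfrac]
    linarith [hineq, hfin]
  obtain ⟨t, ht0, htT, htH⟩ := hblow (H₀ * l^(N+1))
  have := key N t ht0 htT (le_trans (hm_le_I t ht0 htT) hIσN)
  linarith
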